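/- Let k_1 < … < k_n be natural numbers, H_λ = Wr[H_{k_1}, …, H_{k_n}], and for j ∈ ℕ with j ∉ {k_1, …, k_n}, let H_{λ,j} = Wr[H_{k_1}, …, H_{k_n}, H_j]. Define U_λ(x) = x² − 2·(d²/dx²) log H_λ(x) = x² + 2·(H_λ'(x)/H_λ(x))² − 2·H_λ''(x)/H_λ(x) and ψ_{λ,j}(x) = e^{−x²/2}·H_{λ,j}(x)/H_λ(x). Then at every real x with H_λ(x) ≠ 0 one has −ψ_{λ,j}''(x) + U_λ(x)·ψ_{λ,j}(x) = (2j − 2n + 1)·ψ_{λ,j}(x). -/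

import Mathlib

open Polynomial MeasureTheory

/-- The physicists' Hermite polynomials: `H 0 = 1`, `H (n+1) = 2X * H n - (H n)'`. -/
noncomputable def pHermite (R : Type*) [CommRing R] : ℕ → Polynomial R
  | 0 => 1
  | n + 1 => 2 * X * pHermite R n - derivative (pHermite R n)

/-- The Wronskian determinant of a finite family of polynomials. -/
noncomputable def polyWronskian {R : Type*} [CommRing R] {n : ℕ}
    (f : Fin n → Polynomial R) : Polynomial R :=
  (Matrix.of fun i j : Fin n => (⇑(derivative (R := R)))^[(i : ℕ)] (f j)).det

open Matrix

lemma pHermite_succ (R : Type*) [CommRing R] (n : ℕ) :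
    pHermite R (n+1) = 2 * X * pHermite R n - derivative (pHermite R n) := rfl

lemma pHermite_deg (n : ℕ) : (pHermite ℝ n).natDegree = n ∧ (pHermite ℝ n).coeff n = 2 ^ n := by
  induction n with
  | zero => simp [pHermite]
  | succ n ih =>
    obtain ⟨hd, hc⟩ := ih
    have hcoeff : (pHermite ℝ (n+1)).coeff (n+1) = (2:ℝ) ^ (n+1) := by
      rw [pHermite_succ, coeff_sub]
      have h1 : (2 * X * pHermite ℝ n).coeff (n+1) = 2 * (pHermite ℝ n).coeff n := by
        rw [mul_assoc, coeff_ofNat_mul, coeff_X_mul]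
      have h2 : (derivative (pHermite ℝ n)).coeff (n+1) = 0 := by
        apply coeff_eq_zero_of_natDegree_lt
        exact lt_of_le_of_lt (natDegree_derivative_le _) (by omega)
      rw [h1, h2, hc]; ring
    have hdegle : (pHermite ℝ (n+1)).natDegree ≤ n + 1 := by
      rw [pHermite_succ]
      refine le_trans (natDegree_sub_le _ _) ?_
      refine max_le (le_trans natDegree_mul_le ?_) ?_
      · have : (2 * X : ℝ[X]).natDegree ≤ 1 := le_trans natDegree_mul_le (by simp)
        omega
      · exact le_trans (natDegree_derivative_le _) (by omega)
    refine ⟨le_antisymm hdegle (le_natDegree_of_ne_zero ?_), hcoeff⟩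
    rw [hcoeff]; positivity

lemma pHermite_natDegree (n : ℕ) : (pHermite ℝ n).natDegree = n := (pHermite_deg n).1
lemma pHermite_lead (n : ℕ) : (pHermite ℝ n).coeff n = 2 ^ n := (pHermite_deg n).2

lemma pHermite_ode (n : ℕ) :
    derivative (derivative (pHermite ℝ n)) =
      2 * X * derivative (pHermite ℝ n) - 2 * (n : ℝ[X]) * pHermite ℝ n := by
  induction n with
  | zero => simp [pHermite]
  | succ n ih =>
    have hder : derivative (pHermite ℝ (n+1)) = (2 * (n : ℝ[X]) + 2) * pHermite ℝ n := by
      rw [pHermite_succ, derivative_sub, derivative_mul, derivative_mul, ih]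
      simp only [derivative_ofNat, derivative_X]
      ring
    rw [hder, derivative_mul, pHermite_succ]
    have h2 : derivative (2 * (n : ℝ[X]) + 2) = 0 := by
      simp
    rw [h2]
    push_cast
    ring


lemma derivative_finset_prod {ι : Type*} [DecidableEq ι] (s : Finset ι) (f : ι → ℝ[X]) :
    derivative (∏ i ∈ s, f i) = ∑ i ∈ s, (∏ j ∈ s.erase i, f j) * derivative (f i) := by
  induction s using Finset.induction_on with
  | empty => simp
  | @insert a s ha ih =>
    rw [Finset.prod_insert ha, derivative_mul, ih, Finset.sum_insert ha, Finset.erase_insert ha,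
      Finset.mul_sum]
    congr 1
    · ring
    · apply Finset.sum_congr rfl
      intro i hi
      rw [Finset.erase_insert_of_ne (by rintro rfl; exact ha hi),
        Finset.prod_insert (by simp [ha, Finset.mem_erase])]
      ring

lemma derivative_det_col {m : ℕ} (M : Matrix (Fin m) (Fin m) ℝ[X]) :
    derivative M.det = ∑ c : Fin m, (M.updateCol c (fun r => derivative (M r c))).det := by
  conv_lhs => rw [Matrix.det_apply]
  rw [map_sum]
  have h1 : ∀ σ : Equiv.Perm (Fin m),
      derivative (Equiv.Perm.sign σ • ∏ i, M (σ i) i)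
        = ∑ c : Fin m, Equiv.Perm.sign σ •
            ((∏ j ∈ Finset.univ.erase c, M (σ j) j) * derivative (M (σ c) c)) := by
    intro σ
    rw [Units.smul_def, map_zsmul, derivative_finset_prod, Finset.smul_sum]
    simp [Units.smul_def]
  rw [Finset.sum_congr rfl fun σ _ => h1 σ, Finset.sum_comm]
  apply Finset.sum_congr rfl
  intro c _
  rw [Matrix.det_apply]
  apply Finset.sum_congr rfl
  intro σ _
  have hp : ∏ i, M.updateCol c (fun r => derivative (M r c)) (σ i) i
      = derivative (M (σ c) c) * ∏ j ∈ Finset.univ.erase c, M (σ j) j := by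
    rw [← Finset.mul_prod_erase Finset.univ
      (fun i => M.updateCol c (fun r => derivative (M r c)) (σ i) i) (Finset.mem_univ c)]
    congr 1
    · rw [Matrix.updateCol_apply, if_pos rfl]
    · apply Finset.prod_congr rfl
      intro j hj
      rw [Matrix.updateCol_apply, if_neg (Finset.mem_erase.mp hj).1]
  rw [hp, mul_comm]

lemma derivative_det_row {m : ℕ} (M : Matrix (Fin m) (Fin m) ℝ[X]) :
    derivative M.det = ∑ r : Fin m, (M.updateRow r (fun j => derivative (M r j))).det := by
  rw [← Matrix.det_transpose M, derivative_det_col]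
  apply Finset.sum_congr rfl
  intro r _
  rw [Matrix.updateCol_transpose, Matrix.det_transpose]
  rfl


lemma polyWronskian_deriv {m : ℕ} (f : Fin (m+1) → ℝ[X]) :
    derivative (polyWronskian f) =
      ((Matrix.of fun i j : Fin (m+1) => (⇑(derivative (R:=ℝ)))^[(i : ℕ)] (f j)).updateRow
        (Fin.last m) (fun j => (⇑(derivative (R:=ℝ)))^[m+1] (f j))).det := by
  rw [polyWronskian, derivative_det_row]
  rw [Finset.sum_eq_single (Fin.last m)]
  · congr 1
    apply Matrix.ext
    intro i j
    rw [Matrix.updateRow_apply, Matrix.updateRow_apply]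
    by_cases hi : i = Fin.last m
    · rw [if_pos hi, if_pos hi]
      show derivative ((⇑(derivative (R:=ℝ)))^[((Fin.last m : Fin (m+1)) : ℕ)] (f j)) = _
      rw [Fin.val_last, ← Function.iterate_succ_apply' (⇑(derivative (R:=ℝ)))]
    · rw [if_neg hi, if_neg hi]
  · intro r _ hr
    have hrm : (r : ℕ) < m := by
      have := r.isLt
      have : (r : ℕ) ≠ m := by
        intro h
        exact hr (Fin.ext (by simp [h]))
      omega
    apply Matrix.det_zero_of_row_eq (i := r) (j := (⟨(r:ℕ)+1, by omega⟩ : Fin (m+1)))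
    · exact Fin.ne_of_val_ne (by simp)
    · funext c
      rw [Matrix.updateRow_apply, Matrix.updateRow_apply, if_pos rfl,
        if_neg (Fin.ne_of_val_ne (by simp))]
      show derivative ((⇑(derivative (R:=ℝ)))^[(r : ℕ)] (f c)) = _
      rw [← Function.iterate_succ_apply' (⇑(derivative (R:=ℝ)))]
      rfl
  · intro h
    exact absurd (Finset.mem_univ _) h


def cmap (p : ℕ) : Fin p → Fin (p+2) := fun i => ⟨(i:ℕ), by omega⟩

def Emap (p : ℕ) (a : Fin 2) : Fin (p+1) → Fin (p+2) :=
  fun i => if (i:ℕ) < p then ⟨(i:ℕ), by omega⟩ else ⟨p + (a:ℕ), by omega⟩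

lemma blockDJ {p : ℕ} {K : Type*} [Field K] (A : Matrix (Fin p) (Fin p) K)
    (B : Matrix (Fin p) (Fin 2) K) (C : Matrix (Fin 2) (Fin p) K) (D : Matrix (Fin 2) (Fin 2) K)
    (hA : IsUnit A.det) (a b : Fin 2) :
    (Matrix.fromBlocks A (B.submatrix id (fun _ : Fin 1 => b))
      (C.submatrix (fun _ : Fin 1 => a) id) (Matrix.of fun _ _ : Fin 1 => D a b)).det
      = A.det * (D - C * A⁻¹ * B) a b := by
  letI := A.invertibleOfIsUnitDet hA
  rw [Matrix.det_fromBlocks₁₁]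
  congr 1
  rw [Matrix.det_fin_one]
  simp only [Matrix.sub_apply, Matrix.mul_apply, Matrix.submatrix_apply, Matrix.of_apply,
    Matrix.invOf_eq_nonsing_inv, id_eq]

lemma cornerDJ {p : ℕ} {K : Type*} [Field K] (M : Matrix (Fin (p+2)) (Fin (p+2)) K)
    (hA : IsUnit (M.submatrix (cmap p) (cmap p)).det) :
    (M.submatrix (Emap p 0) (Emap p 0)).det * (M.submatrix (Emap p 1) (Emap p 1)).det
      - (M.submatrix (Emap p 1) (Emap p 0)).det * (M.submatrix (Emap p 0) (Emap p 1)).det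
    = (M.submatrix (cmap p) (cmap p)).det * M.det := by
  have hfun : ((finSumFinEquiv : Fin p ⊕ Fin 2 ≃ Fin (p+2)) ∘ Sum.inl) = cmap p := by
    funext i
    apply Fin.ext
    simp [cmap]
  set A := M.submatrix (cmap p) (cmap p) with hAdef
  set B := M.submatrix (cmap p) ((finSumFinEquiv : Fin p ⊕ Fin 2 ≃ Fin (p+2)) ∘ Sum.inr) with hB
  set C := M.submatrix ((finSumFinEquiv : Fin p ⊕ Fin 2 ≃ Fin (p+2)) ∘ Sum.inr) (cmap p) with hC
  set D := M.submatrix ((finSumFinEquiv : Fin p ⊕ Fin 2 ≃ Fin (p+2)) ∘ Sum.inr)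
    ((finSumFinEquiv : Fin p ⊕ Fin 2 ≃ Fin (p+2)) ∘ Sum.inr) with hD
  letI := A.invertibleOfIsUnitDet hA
  have hblocks : M.submatrix (finSumFinEquiv : Fin p ⊕ Fin 2 ≃ Fin (p+2))
      (finSumFinEquiv : Fin p ⊕ Fin 2 ≃ Fin (p+2)) = Matrix.fromBlocks A B C D := by
    rw [hAdef, hB, hC, hD, ← hfun]
    ext (i | i) (j | j) <;> rfl
  have hM : M.det = A.det * (D - C * A⁻¹ * B).det := by
    rw [← Matrix.det_submatrix_equiv_self (finSumFinEquiv : Fin p ⊕ Fin 2 ≃ Fin (p+2)) M,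
      hblocks, Matrix.det_fromBlocks₁₁, Matrix.invOf_eq_nonsing_inv]
  have key : ∀ a b : Fin 2, (M.submatrix (Emap p a) (Emap p b)).det
      = A.det * (D - C * A⁻¹ * B) a b := by
    intro a b
    rw [← Matrix.det_submatrix_equiv_self (finSumFinEquiv : Fin p ⊕ Fin 1 ≃ Fin (p+1))
      (M.submatrix (Emap p a) (Emap p b)), Matrix.submatrix_submatrix]
    have hmat : M.submatrix (Emap p a ∘ (finSumFinEquiv : Fin p ⊕ Fin 1 ≃ Fin (p+1)))
        (Emap p b ∘ (finSumFinEquiv : Fin p ⊕ Fin 1 ≃ Fin (p+1)))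
        = Matrix.fromBlocks A (B.submatrix id (fun _ : Fin 1 => b))
            (C.submatrix (fun _ : Fin 1 => a) id) (Matrix.of fun _ _ : Fin 1 => D a b) := by
      have hval : ∀ (c : Fin 2) (i : Fin p ⊕ Fin 1),
          Emap p c (finSumFinEquiv i) = finSumFinEquiv (Sum.map id (fun _ : Fin 1 => c) i) := by
        rintro c (i | i)
        · apply Fin.ext
          simp [Emap, i.isLt]
        · apply Fin.ext
          have : (i : ℕ) = 0 := by omega
          simp [Emap, this]
      ext (i | i) (j | j) <;>
        simp only [Matrix.submatrix_apply, Function.comp_apply, hval, Sum.map_inl, Sum.map_inr,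
          Matrix.fromBlocks_apply₁₁, Matrix.fromBlocks_apply₁₂, Matrix.fromBlocks_apply₂₁,
          Matrix.fromBlocks_apply₂₂, hAdef, hB, hC, hD, Matrix.of_apply, id_eq, ← hfun]
    rw [hmat, blockDJ A B C D hA a b]
  rw [key 0 0, key 1 1, key 1 0, key 0 1, hM,
    Matrix.det_fin_two (D - C * A⁻¹ * B)]
  ring


lemma snoc_apply_lt {q : ℕ} (u : Fin q → ℝ[X]) (a : ℝ[X]) (i : Fin (q+1)) (hi : (i:ℕ) < q) :
    (Fin.snoc u a : Fin (q+1) → ℝ[X]) i = u ⟨(i:ℕ), hi⟩ := by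
  simp [Fin.snoc, hi]
  rfl

lemma snoc_apply_top {q : ℕ} (u : Fin q → ℝ[X]) (a : ℝ[X]) (i : Fin (q+1)) (hi : (i:ℕ) = q) :
    (Fin.snoc u a : Fin (q+1) → ℝ[X]) i = a := by
  simp [Fin.snoc, hi]

lemma polyWronskian_jacobi {p : ℕ} (f : Fin p → ℝ[X]) (g h : ℝ[X])
    (hf : polyWronskian f ≠ 0) :
    polyWronskian (Fin.snoc f g) * derivative (polyWronskian (Fin.snoc f h))
      - derivative (polyWronskian (Fin.snoc f g)) * polyWronskian (Fin.snoc f h)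
    = polyWronskian f * polyWronskian (Fin.snoc (Fin.snoc f g) h) := by
  classical
  set W : Matrix (Fin (p+2)) (Fin (p+2)) ℝ[X] :=
    Matrix.of fun i j : Fin (p+2) =>
      (⇑(derivative (R:=ℝ)))^[(i:ℕ)] ((Fin.snoc (Fin.snoc f g : Fin (p+1) → ℝ[X]) h :
        Fin (p+2) → ℝ[X]) j) with hW
  have hEval0 : ∀ i : Fin (p+1), ((Emap p 0 i) : ℕ) = (i : ℕ) := by
    intro i
    simp only [Emap]
    split <;> simp <;> omega
  have hEval1lt : ∀ i : Fin (p+1), (i:ℕ) < p → ((Emap p 1 i) : ℕ) = (i : ℕ) := by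
    intro i hi
    simp only [Emap]
    rw [if_pos hi]
  have hEval1last : ((Emap p 1 (Fin.last p)) : ℕ) = p + 1 := by
    simp only [Emap, Fin.val_last]
    rw [if_neg (by omega)]
    rfl
  have hcol0 : ∀ j : Fin (p+1),
      (Fin.snoc (Fin.snoc f g : Fin (p+1) → ℝ[X]) h : Fin (p+2) → ℝ[X]) (Emap p 0 j)
        = (Fin.snoc f g : Fin (p+1) → ℝ[X]) j := by
    intro j
    by_cases hj : (j:ℕ) < p
    · rw [snoc_apply_lt _ _ _ (by rw [hEval0]; omega), snoc_apply_lt _ _ _ (by simp [hEval0, hj]),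
        snoc_apply_lt _ _ j hj]
      congr 1
      apply Fin.ext
      simp [hEval0]
    · have hj' : (j:ℕ) = p := by omega
      rw [snoc_apply_lt _ _ _ (by rw [hEval0]; omega), snoc_apply_top _ _ _ (by simp [hEval0, hj']),
        snoc_apply_top _ _ j hj']
  have hcol1 : ∀ j : Fin (p+1),
      (Fin.snoc (Fin.snoc f g : Fin (p+1) → ℝ[X]) h : Fin (p+2) → ℝ[X]) (Emap p 1 j)
        = (Fin.snoc f h : Fin (p+1) → ℝ[X]) j := by
    intro j
    by_cases hj : (j:ℕ) < p
    · rw [snoc_apply_lt _ _ _ (by rw [hEval1lt j hj]; omega),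
        snoc_apply_lt _ _ _ (by simp [hEval1lt j hj, hj]), snoc_apply_lt _ _ j hj]
      congr 1
      apply Fin.ext
      simp [hEval1lt j hj]
    · have hj' : j = Fin.last p := Fin.ext (by rw [Fin.val_last]; omega)
      rw [hj', snoc_apply_top _ _ _ (by rw [hEval1last]),
        snoc_apply_top _ _ _ (by rw [Fin.val_last])]
  have hMA : W.submatrix (cmap p) (cmap p)
      = Matrix.of (fun i j : Fin p => (⇑(derivative (R:=ℝ)))^[(i:ℕ)] (f j)) := by
    apply Matrix.ext
    intro i j
    have hj1 : ((cmap p j : Fin (p+2)) : ℕ) < p + 1 := by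
      have := j.isLt
      simp only [cmap]
      omega
    show (⇑(derivative (R:=ℝ)))^[((cmap p i : Fin (p+2)) : ℕ)] _ = _
    rw [snoc_apply_lt _ _ _ hj1]
    have hj2 : ((⟨((cmap p j : Fin (p+2)) : ℕ), hj1⟩ : Fin (p+1)) : ℕ) < p := by
      simp only [cmap]
      exact j.isLt
    rw [snoc_apply_lt _ _ _ hj2]
    exact congrArg (⇑(derivative (R:=ℝ)))^[(i:ℕ)] (congrArg f (Fin.ext rfl))
  have hM00 : W.submatrix (Emap p 0) (Emap p 0)
      = Matrix.of (fun i j : Fin (p+1) =>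
          (⇑(derivative (R:=ℝ)))^[(i:ℕ)] ((Fin.snoc f g : Fin (p+1) → ℝ[X]) j)) := by
    apply Matrix.ext
    intro i j
    show (⇑(derivative (R:=ℝ)))^[((Emap p 0 i) : ℕ)] _ = _
    rw [hEval0, hcol0]
    rfl
  have hM01 : W.submatrix (Emap p 0) (Emap p 1)
      = Matrix.of (fun i j : Fin (p+1) =>
          (⇑(derivative (R:=ℝ)))^[(i:ℕ)] ((Fin.snoc f h : Fin (p+1) → ℝ[X]) j)) := by
    apply Matrix.ext
    intro i j
    show (⇑(derivative (R:=ℝ)))^[((Emap p 0 i) : ℕ)] _ = _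
    rw [hEval0, hcol1]
    rfl
  have hM10 : W.submatrix (Emap p 1) (Emap p 0)
      = (Matrix.of (fun i j : Fin (p+1) =>
          (⇑(derivative (R:=ℝ)))^[(i:ℕ)] ((Fin.snoc f g : Fin (p+1) → ℝ[X]) j))).updateRow
        (Fin.last p) (fun j => (⇑(derivative (R:=ℝ)))^[p+1] ((Fin.snoc f g : Fin (p+1) → ℝ[X]) j)) := by
    apply Matrix.ext
    intro i j
    rw [Matrix.updateRow_apply]
    by_cases hi : i = Fin.last p
    · rw [if_pos hi, hi]
      show (⇑(derivative (R:=ℝ)))^[((Emap p 1 (Fin.last p)) : ℕ)] _ = _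
      rw [hEval1last, hcol0]
    · rw [if_neg hi]
      have hi' : (i:ℕ) < p := by
        have h1 := i.isLt
        have h2 : (i:ℕ) ≠ p := fun hh => hi (Fin.ext (by rw [Fin.val_last]; omega))
        omega
      show (⇑(derivative (R:=ℝ)))^[((Emap p 1 i) : ℕ)] _ = _
      rw [hEval1lt i hi', hcol0]
      rfl
  have hM11 : W.submatrix (Emap p 1) (Emap p 1)
      = (Matrix.of (fun i j : Fin (p+1) =>
          (⇑(derivative (R:=ℝ)))^[(i:ℕ)] ((Fin.snoc f h : Fin (p+1) → ℝ[X]) j))).updateRow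
        (Fin.last p) (fun j => (⇑(derivative (R:=ℝ)))^[p+1] ((Fin.snoc f h : Fin (p+1) → ℝ[X]) j)) := by
    apply Matrix.ext
    intro i j
    rw [Matrix.updateRow_apply]
    by_cases hi : i = Fin.last p
    · rw [if_pos hi, hi]
      show (⇑(derivative (R:=ℝ)))^[((Emap p 1 (Fin.last p)) : ℕ)] _ = _
      rw [hEval1last, hcol1]
    · rw [if_neg hi]
      have hi' : (i:ℕ) < p := by
        have h1 := i.isLt
        have h2 : (i:ℕ) ≠ p := fun hh => hi (Fin.ext (by rw [Fin.val_last]; omega))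
        omega
      show (⇑(derivative (R:=ℝ)))^[((Emap p 1 i) : ℕ)] _ = _
      rw [hEval1lt i hi', hcol1]
      rfl
  set K := FractionRing ℝ[X]
  set φ := algebraMap ℝ[X] K with hφ
  have hinj : Function.Injective φ := IsFractionRing.injective ℝ[X] K
  have hsub : ∀ (q : ℕ) (e1 e2 : Fin q → Fin (p+2)),
      (W.map φ).submatrix e1 e2 = φ.mapMatrix (W.submatrix e1 e2) := fun _ _ _ => rfl
  have hAunit : IsUnit ((W.map φ).submatrix (cmap p) (cmap p)).det := by
    rw [hsub, ← RingHom.map_det]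
    apply IsUnit.mk0
    intro hcontr
    apply hf
    apply hinj
    rw [map_zero, ← hcontr]
    congr 1
    rw [hMA]
    rfl
  have corner := cornerDJ (W.map φ) hAunit
  rw [hsub, hsub, hsub, hsub, hsub, ← RingHom.map_det, ← RingHom.map_det, ← RingHom.map_det,
    ← RingHom.map_det, ← RingHom.map_det] at corner
  have hWdet : (W.map φ).det = φ W.det := by
    rw [RingHom.map_det]
    rfl
  rw [hWdet] at corner
  have e1 : polyWronskian (Fin.snoc f g) = (W.submatrix (Emap p 0) (Emap p 0)).det := by
    rw [hM00]; rfl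
  have e2 : polyWronskian (Fin.snoc f h) = (W.submatrix (Emap p 0) (Emap p 1)).det := by
    rw [hM01]; rfl
  have e3 : derivative (polyWronskian (Fin.snoc f g))
      = (W.submatrix (Emap p 1) (Emap p 0)).det := by
    rw [polyWronskian_deriv, hM10]
  have e4 : derivative (polyWronskian (Fin.snoc f h))
      = (W.submatrix (Emap p 1) (Emap p 1)).det := by
    rw [polyWronskian_deriv, hM11]
  have e5 : polyWronskian f = (W.submatrix (cmap p) (cmap p)).det := by
    rw [hMA]; rfl
  have e6 : polyWronskian (Fin.snoc (Fin.snoc f g) h) = W.det := rfl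
  rw [e3, e4, e1, e2, e5, e6]
  apply hinj
  rw [map_sub, _root_.map_mul φ, _root_.map_mul φ, _root_.map_mul φ]
  exact corner


lemma coeff_finset_prod {ι : Type*} [DecidableEq ι] (s : Finset ι) (f : ι → ℝ[X]) (e : ι → ℕ)
    (h : ∀ i ∈ s, (f i).natDegree ≤ e i) :
    (∏ i ∈ s, f i).coeff (∑ i ∈ s, e i) = ∏ i ∈ s, (f i).coeff (e i) := by
  induction s using Finset.induction_on with
  | empty => simp
  | @insert a s ha ih =>
    rw [Finset.prod_insert ha, Finset.sum_insert ha, Finset.prod_insert ha,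
      coeff_mul_add_eq_of_natDegree_le (h a (Finset.mem_insert_self a s))
        (le_trans (natDegree_prod_le s f)
          (Finset.sum_le_sum fun i hi => h i (Finset.mem_insert_of_mem hi))),
      ih fun i hi => h i (Finset.mem_insert_of_mem hi)]

lemma hermite_wronskian_ne_zero {n : ℕ} (k : Fin n → ℕ) (hk : StrictMono k) :
    polyWronskian (fun i => pHermite ℝ (k i)) ≠ 0 := by
  classical
  have hki : ∀ i : Fin n, (i:ℕ) ≤ k i := by
    have key : ∀ (m : ℕ) (i : Fin n), (i:ℕ) = m → m ≤ k i := by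
      intro m
      induction m with
      | zero => exact fun i _ => Nat.zero_le _
      | succ m ih =>
        intro i hi
        have hj : m < n := by have := i.isLt; omega
        have h1 := ih ⟨m, hj⟩ rfl
        have h2 : (⟨m, hj⟩ : Fin n) < i := by rw [Fin.lt_def]; simp; omega
        have h3 := hk h2
        omega
    exact fun i => key (i:ℕ) i rfl
  set M : Matrix (Fin n) (Fin n) ℝ[X] :=
    Matrix.of fun i j : Fin n => (⇑(derivative (R := ℝ)))^[(i : ℕ)] (pHermite ℝ (k j)) with hM
  set D := ∑ i : Fin n, (k i - (i:ℕ)) with hD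
  have hperσ : ∀ σ : Equiv.Perm (Fin n),
      (∏ j, M (σ j) j).coeff D
        = ∏ j, (((k j).descFactorial ((σ j : ℕ)) : ℝ) * 2 ^ (k j)) := by
    intro σ
    by_cases hσ : ∀ j, ((σ j : ℕ)) ≤ k j
    · have hsum : ∑ j, (k j - ((σ j : ℕ))) = D := by
        rw [Finset.sum_tsub_distrib _ fun j _ => hσ j, hD,
          Finset.sum_tsub_distrib _ fun j _ => hki j]
        congr 1
        exact (Equiv.sum_comp σ fun j : Fin n => (j : ℕ))
      rw [← hsum, coeff_finset_prod _ _ _ (fun j _ => by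
        refine le_trans (natDegree_iterate_derivative _ _) ?_
        rw [pHermite_natDegree])]
      apply Finset.prod_congr rfl
      intro j _
      show ((⇑(derivative (R := ℝ)))^[((σ j : ℕ))] (pHermite ℝ (k j))).coeff (k j - (σ j : ℕ)) = _
      rw [coeff_iterate_derivative]
      have he : k j - ((σ j : ℕ)) + ((σ j : ℕ)) = k j := by
        have := hσ j
        omega
      rw [he, pHermite_lead, nsmul_eq_mul]
    · push_neg at hσ
      obtain ⟨j0, hj0⟩ := hσ
      have hzero : M (σ j0) j0 = 0 := by
        show (⇑(derivative (R := ℝ)))^[((σ j0 : ℕ))] (pHermite ℝ (k j0)) = 0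
        apply iterate_derivative_eq_zero
        rw [pHermite_natDegree]
        exact hj0
      have h1 : (∏ j, M (σ j) j) = 0 := Finset.prod_eq_zero (Finset.mem_univ j0) hzero
      have h2 : (∏ j, (((k j).descFactorial ((σ j : ℕ)) : ℝ) * 2 ^ (k j))) = 0 :=
        Finset.prod_eq_zero (Finset.mem_univ j0)
          (by rw [Nat.descFactorial_eq_zero_iff_lt.mpr hj0]; simp)
      rw [h1, h2]
      simp
  have hcoeff : (polyWronskian (fun i => pHermite ℝ (k i))).coeff D
      = (Matrix.of fun i j : Fin n => ((k j).descFactorial (i:ℕ) : ℝ)).det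
        * ∏ j, (2:ℝ) ^ (k j) := by
    show (M.det).coeff D = _
    rw [Matrix.det_apply, Polynomial.finset_sum_coeff]
    have : ∀ σ : Equiv.Perm (Fin n),
        ((Equiv.Perm.sign σ • ∏ j, M (σ j) j).coeff D)
          = Equiv.Perm.sign σ • ((∏ j, ((k j).descFactorial ((σ j : ℕ)) : ℝ))
              * ∏ j, (2:ℝ) ^ (k j)) := by
      intro σ
      rw [Units.smul_def, Units.smul_def, Polynomial.coeff_smul, hperσ σ,
        Finset.prod_mul_distrib]
    rw [Finset.sum_congr rfl fun σ _ => this σ]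
    rw [Matrix.det_apply, Finset.sum_mul]
    apply Finset.sum_congr rfl
    intro σ _
    rw [smul_mul_assoc]
    rfl
  have hvdm : (Matrix.of fun i j : Fin n => ((k j).descFactorial (i:ℕ) : ℝ)).det ≠ 0 := by
    have htr : (Matrix.of fun i j : Fin n => ((k j).descFactorial (i:ℕ) : ℝ))
        = (Matrix.of fun i j : Fin n =>
            ((descPochhammer ℝ (j:ℕ)).eval ((k i : ℕ) : ℝ)))ᵀ := by
      apply Matrix.ext
      intro i j
      show ((k j).descFactorial (i:ℕ) : ℝ) = (descPochhammer ℝ (i:ℕ)).eval ((k j : ℕ) : ℝ)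
      rw [descPochhammer_eval_eq_descFactorial]
    rw [htr, Matrix.det_transpose,
      ← Matrix.det_eval_matrixOfPolynomials_eq_det_vandermonde
        (fun i : Fin n => ((k i : ℕ) : ℝ)) (fun j : Fin n => descPochhammer ℝ (j:ℕ))
        (fun i => descPochhammer_natDegree (R := ℝ) (i:ℕ)) (fun i => monic_descPochhammer _ _)]
    rw [Matrix.det_vandermonde_ne_zero_iff]
    intro a b hab
    exact hk.injective (Nat.cast_injective hab)
  intro hzero
  have h0 : (polyWronskian (fun i => pHermite ℝ (k i))).coeff D = 0 := by
    rw [hzero]; simp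
  rw [hcoeff] at h0
  rcases mul_eq_zero.mp h0 with h | h
  · exact hvdm h
  · exact (by positivity : (∏ j, (2:ℝ) ^ (k j)) ≠ 0) h


lemma darbouxReal (x a b v0 v1 v2 v3 g0 g1 g2 g3 c0 c1 c2 c3 f0 f1 f2 : ℝ)
    (hv : v0 ≠ 0)
    (h1 : g2*v0 + g0*v2 - 2*(g1*v1) - 2*x*(g1*v0 - g0*v1) = a*(g0*v0))
    (h1' : g3*v0 + g2*v1 + (g1*v2 + g0*v3) - 2*(g2*v1 + g1*v2)
        - (2*(g1*v0 - g0*v1) + 2*x*(g2*v0 - g0*v2)) = a*(g1*v0 + g0*v1))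
    (h2 : c2*v0 + c0*v2 - 2*(c1*v1) - 2*x*(c1*v0 - c0*v1) = b*(c0*v0))
    (h2' : c3*v0 + c2*v1 + (c1*v2 + c0*v3) - 2*(c2*v1 + c1*v2)
        - (2*(c1*v0 - c0*v1) + 2*x*(c2*v0 - c0*v2)) = b*(c1*v0 + c0*v1))
    (h3 : g0*c1 - g1*c0 = v0*f0)
    (h3' : g0*c2 - g2*c0 = v1*f0 + v0*f1)
    (h3'' : g1*c2 + g0*c3 - (g3*c0 + g2*c1) = v2*f0 + 2*(v1*f1) + v0*f2) :
    f2*g0 + f0*g2 - 2*(f1*g1) - 2*x*(f1*g0 - f0*g1) = (b+2)*(f0*g0) := by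
  have hg2 : g2 = (a*(g0*v0) + 2*(g1*v1) + 2*x*(g1*v0 - g0*v1) - g0*v2)/v0 := by
    field_simp
    linear_combination h1
  have hc2 : c2 = (b*(c0*v0) + 2*(c1*v1) + 2*x*(c1*v0 - c0*v1) - c0*v2)/v0 := by
    field_simp
    linear_combination h2
  have hg3 : g3 = (a*(g1*v0 + g0*v1) + 2*(g2*v1 + g1*v2)
      + (2*(g1*v0 - g0*v1) + 2*x*(g2*v0 - g0*v2)) - (g2*v1 + (g1*v2 + g0*v3)))/v0 := by
    field_simp
    linear_combination h1'
  have hc3 : c3 = (b*(c1*v0 + c0*v1) + 2*(c2*v1 + c1*v2)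
      + (2*(c1*v0 - c0*v1) + 2*x*(c2*v0 - c0*v2)) - (c2*v1 + (c1*v2 + c0*v3)))/v0 := by
    field_simp
    linear_combination h2'
  have hf0 : f0 = (g0*c1 - g1*c0)/v0 := by
    field_simp
    linear_combination -h3
  have hf1 : f1 = ((g0*c2 - g2*c0) - v1*f0)/v0 := by
    field_simp
    linear_combination -h3'
  have hf2 : f2 = ((g1*c2 + g0*c3 - (g3*c0 + g2*c1)) - v2*f0 - 2*(v1*f1))/v0 := by
    field_simp
    linear_combination -h3''
  rw [hf2, hf1, hf0, hg3, hc3, hg2, hc2]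
  field_simp
  ring


lemma star_identity (n : ℕ) : ∀ (k : Fin n → ℕ), StrictMono k → ∀ j : ℕ,
    derivative (derivative (polyWronskian (Fin.snoc (fun i => pHermite ℝ (k i)) (pHermite ℝ j))))
        * polyWronskian (fun i => pHermite ℝ (k i))
      + polyWronskian (Fin.snoc (fun i => pHermite ℝ (k i)) (pHermite ℝ j))
        * derivative (derivative (polyWronskian (fun i => pHermite ℝ (k i))))
      - 2 * (derivative (polyWronskian (Fin.snoc (fun i => pHermite ℝ (k i)) (pHermite ℝ j)))
        * derivative (polyWronskian (fun i => pHermite ℝ (k i))))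
      - 2 * X * (derivative (polyWronskian (Fin.snoc (fun i => pHermite ℝ (k i)) (pHermite ℝ j)))
          * polyWronskian (fun i => pHermite ℝ (k i))
        - polyWronskian (Fin.snoc (fun i => pHermite ℝ (k i)) (pHermite ℝ j))
          * derivative (polyWronskian (fun i => pHermite ℝ (k i))))
    = Polynomial.C (2*(n:ℝ) - 2*(j:ℝ))
        * (polyWronskian (Fin.snoc (fun i => pHermite ℝ (k i)) (pHermite ℝ j))
          * polyWronskian (fun i => pHermite ℝ (k i))) := by
  induction n with
  | zero =>
    intro k _ j
    have hG : polyWronskian (fun i : Fin 0 => pHermite ℝ (k i)) = 1 := Matrix.det_isEmpty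
    have hF : polyWronskian (Fin.snoc (fun i : Fin 0 => pHermite ℝ (k i)) (pHermite ℝ j))
        = pHermite ℝ j := by
      rw [polyWronskian, Matrix.det_fin_one]
      rfl
    rw [hG, hF]
    simp only [derivative_one, mul_one, mul_zero, sub_zero, zero_mul]
    have hode := pHermite_ode j
    simp only [map_sub, _root_.map_mul, C_eq_natCast, map_ofNat, Nat.cast_zero, map_zero]
    push_cast
    linear_combination hode
  | succ n ih =>
    intro k hk j
    set kc : Fin n → ℕ := fun i => k i.castSucc with hkc_def
    have hkc : StrictMono kc := fun a b hab => hk (Fin.castSucc_lt_castSucc_iff.mpr hab)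
    have hV : polyWronskian (fun i => pHermite ℝ (kc i)) ≠ 0 :=
      hermite_wronskian_ne_zero kc hkc
    have hGsnoc : (fun i : Fin (n+1) => pHermite ℝ (k i))
        = Fin.snoc (fun i : Fin n => pHermite ℝ (kc i)) (pHermite ℝ (k (Fin.last n))) := by
      funext i
      cases i using Fin.lastCases with
      | last => rw [Fin.snoc_last]
      | cast i => rw [Fin.snoc_castSucc]
    have IH1 := ih kc hkc (k (Fin.last n))
    have IH2 := ih kc hkc j
    have jac := polyWronskian_jacobi (fun i => pHermite ℝ (kc i)) (pHermite ℝ (k (Fin.last n)))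
      (pHermite ℝ j) hV
    rw [← hGsnoc] at jac IH1
    rw [← sub_eq_zero]
    apply Polynomial.eq_zero_of_infinite_isRoot
    apply Set.Infinite.mono (s := {x : ℝ | ¬ (polyWronskian (fun i => pHermite ℝ (kc i))).IsRoot x})
    · intro x hx
      have hvx : (polyWronskian (fun i => pHermite ℝ (kc i))).eval x ≠ 0 := hx
      have e1 := congrArg (Polynomial.eval x) IH1
      have e1' := congrArg (Polynomial.eval x) (congrArg (⇑(derivative (R:=ℝ))) IH1)
      have e2 := congrArg (Polynomial.eval x) IH2
      have e2' := congrArg (Polynomial.eval x) (congrArg (⇑(derivative (R:=ℝ))) IH2)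
      have e3 := congrArg (Polynomial.eval x) jac
      have e3' := congrArg (Polynomial.eval x) (congrArg (⇑(derivative (R:=ℝ))) jac)
      have e3'' := congrArg (Polynomial.eval x)
        (congrArg (⇑(derivative (R:=ℝ))) (congrArg (⇑(derivative (R:=ℝ))) jac))
      simp only [derivative_mul, derivative_sub, derivative_add, derivative_ofNat,
        derivative_X, derivative_C, derivative_one, eval_add, eval_sub, eval_mul, eval_ofNat,
        eval_X, eval_C, zero_mul, mul_zero, add_zero, zero_add, mul_one, one_mul] at e1 e1' e2 e2' e3 e3' e3''
      have key := darbouxReal x (2*(n:ℝ) - 2*((k (Fin.last n)):ℝ)) (2*(n:ℝ) - 2*(j:ℝ))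
        ((polyWronskian (fun i => pHermite ℝ (kc i))).eval x)
        ((derivative (polyWronskian (fun i => pHermite ℝ (kc i)))).eval x)
        ((derivative (derivative (polyWronskian (fun i => pHermite ℝ (kc i))))).eval x)
        ((derivative (derivative (derivative (polyWronskian (fun i => pHermite ℝ (kc i)))))).eval x)
        ((polyWronskian (fun i : Fin (n+1) => pHermite ℝ (k i))).eval x)
        ((derivative (polyWronskian (fun i : Fin (n+1) => pHermite ℝ (k i)))).eval x)
        ((derivative (derivative (polyWronskian (fun i : Fin (n+1) => pHermite ℝ (k i))))).eval x)
        ((derivative (derivative (derivative (polyWronskian (fun i : Fin (n+1) => pHermite ℝ (k i)))))).eval x)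
        ((polyWronskian (Fin.snoc (fun i => pHermite ℝ (kc i)) (pHermite ℝ j))).eval x)
        ((derivative (polyWronskian (Fin.snoc (fun i => pHermite ℝ (kc i)) (pHermite ℝ j)))).eval x)
        ((derivative (derivative (polyWronskian (Fin.snoc (fun i => pHermite ℝ (kc i)) (pHermite ℝ j))))).eval x)
        ((derivative (derivative (derivative (polyWronskian (Fin.snoc (fun i => pHermite ℝ (kc i)) (pHermite ℝ j)))))).eval x)
        ((polyWronskian (Fin.snoc (fun i : Fin (n+1) => pHermite ℝ (k i)) (pHermite ℝ j))).eval x)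
        ((derivative (polyWronskian (Fin.snoc (fun i : Fin (n+1) => pHermite ℝ (k i)) (pHermite ℝ j)))).eval x)
        ((derivative (derivative (polyWronskian (Fin.snoc (fun i : Fin (n+1) => pHermite ℝ (k i)) (pHermite ℝ j))))).eval x)
        hvx
        (by linear_combination e1) (by linear_combination e1')
        (by linear_combination e2) (by linear_combination e2')
        (by linear_combination e3) (by linear_combination e3') (by linear_combination e3'')
      show ((_ : ℝ[X])).eval x = 0
      simp only [eval_sub, eval_add, eval_mul, eval_ofNat, eval_X, eval_C]
      push_cast
      linear_combination key
    · apply Set.Finite.infinite_compl (s := {x : ℝ | (polyWronskian (fun i => pHermite ℝ (kc i))).IsRoot x})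
      exact Polynomial.finite_setOf_isRoot hV


theorem stmt1 (n : ℕ) (k : Fin n → ℕ) (hk : StrictMono k)
    (j : ℕ) (hj : ∀ i : Fin n, j ≠ k i) :
    ∀ Hlam Hlamj : Polynomial ℝ,
      Hlam = polyWronskian (fun i => pHermite ℝ (k i)) →
      Hlamj = polyWronskian (Fin.snoc (fun i => pHermite ℝ (k i)) (pHermite ℝ j)) →
      ∀ x : ℝ, Hlam.eval x ≠ 0 →
        -(deriv (deriv (fun t : ℝ =>
              Real.exp (-t ^ 2 / 2) * Hlamj.eval t / Hlam.eval t)) x)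
          + (x ^ 2 + 2 * ((derivative Hlam).eval x / Hlam.eval x) ^ 2
              - 2 * (derivative (derivative Hlam)).eval x / Hlam.eval x)
            * (Real.exp (-x ^ 2 / 2) * Hlamj.eval x / Hlam.eval x)
        = (2 * (j : ℝ) - 2 * (n : ℝ) + 1)
            * (Real.exp (-x ^ 2 / 2) * Hlamj.eval x / Hlam.eval x) := by
  intro Hlam Hlamj hHlam hHlamj x hx
  have star := star_identity n k hk j
  rw [← hHlam, ← hHlamj] at star
  have estar := congrArg (Polynomial.eval x) star
  simp only [eval_add, eval_sub, eval_mul, eval_ofNat, eval_X, eval_C] at estar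
  -- exponential derivative
  have heExp : ∀ t : ℝ, HasDerivAt (fun s : ℝ => Real.exp (-s ^ 2 / 2))
      (-t * Real.exp (-t ^ 2 / 2)) t := by
    intro t
    have h1 : HasDerivAt (fun s : ℝ => -s ^ 2 / 2) (-t) t := by
      have h2 := ((hasDerivAt_pow 2 t).neg).div_const 2
      exact h2.congr_deriv (by push_cast; ring)
    have h3 := (Real.hasDerivAt_exp (-t ^ 2 / 2)).comp t h1
    exact h3.congr_deriv (by ring)
  -- first derivative of psi
  set D1 : ℝ → ℝ := fun t =>
    ((-t * Real.exp (-t ^ 2 / 2) * Hlamj.eval t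
        + Real.exp (-t ^ 2 / 2) * (derivative Hlamj).eval t) * Hlam.eval t
      - Real.exp (-t ^ 2 / 2) * Hlamj.eval t * (derivative Hlam).eval t) / (Hlam.eval t) ^ 2
    with hD1def
  have hψ : ∀ t : ℝ, Hlam.eval t ≠ 0 →
      HasDerivAt (fun s : ℝ => Real.exp (-s ^ 2 / 2) * Hlamj.eval s / Hlam.eval s) (D1 t) t := by
    intro t ht
    exact ((heExp t).mul (Hlamj.hasDerivAt t)).div (Hlam.hasDerivAt t) ht
  have hev : (deriv (fun t : ℝ => Real.exp (-t ^ 2 / 2) * Hlamj.eval t / Hlam.eval t))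
      =ᶠ[nhds x] D1 := by
    have hcont : ContinuousAt (fun s : ℝ => Hlam.eval s) x := Hlam.continuousAt
    filter_upwards [hcont.eventually_ne hx] with y hy
    exact (hψ y hy).deriv
  have hdd : deriv (deriv (fun t : ℝ => Real.exp (-t ^ 2 / 2) * Hlamj.eval t / Hlam.eval t)) x
      = deriv D1 x := hev.deriv_eq
  -- second derivative
  have hnum : HasDerivAt (fun t : ℝ =>
      (-t * Real.exp (-t ^ 2 / 2) * Hlamj.eval t
        + Real.exp (-t ^ 2 / 2) * (derivative Hlamj).eval t) * Hlam.eval t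
      - Real.exp (-t ^ 2 / 2) * Hlamj.eval t * (derivative Hlam).eval t)
      ((((-1 * Real.exp (-x ^ 2 / 2) + -x * (-x * Real.exp (-x ^ 2 / 2))) * Hlamj.eval x
          + -x * Real.exp (-x ^ 2 / 2) * (derivative Hlamj).eval x
          + (-x * Real.exp (-x ^ 2 / 2) * (derivative Hlamj).eval x
            + Real.exp (-x ^ 2 / 2) * (derivative (derivative Hlamj)).eval x)) * Hlam.eval x
        + (-x * Real.exp (-x ^ 2 / 2) * Hlamj.eval x
            + Real.exp (-x ^ 2 / 2) * (derivative Hlamj).eval x) * (derivative Hlam).eval x)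
       - ((-x * Real.exp (-x ^ 2 / 2) * Hlamj.eval x
            + Real.exp (-x ^ 2 / 2) * (derivative Hlamj).eval x) * (derivative Hlam).eval x
          + Real.exp (-x ^ 2 / 2) * Hlamj.eval x * (derivative (derivative Hlam)).eval x)) x := by
    refine HasDerivAt.sub ?_ ?_
    · refine HasDerivAt.mul (HasDerivAt.add ?_ ?_) (Hlam.hasDerivAt x)
      · exact ((((hasDerivAt_id x).neg).mul (heExp x)).mul (Hlamj.hasDerivAt x))
      · exact (heExp x).mul ((derivative Hlamj).hasDerivAt x)
    · exact ((heExp x).mul (Hlamj.hasDerivAt x)).mul ((derivative Hlam).hasDerivAt x)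
  have hden : HasDerivAt (fun t : ℝ => (Hlam.eval t) ^ 2)
      ((2 : ℕ) * (Hlam.eval x) ^ 1 * (derivative Hlam).eval x) x :=
    (Hlam.hasDerivAt x).pow 2
  have hD1x := hnum.div hden (pow_ne_zero 2 hx)
  rw [hdd, (show HasDerivAt D1 _ x from hD1x).deriv]
  have hexp : Real.exp (-x ^ 2 / 2) ≠ 0 := Real.exp_ne_zero _
  field_simp
  linear_combination (- (Hlam.eval x)) * estar
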